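/- Let P = {x ∈ [0,2]² : x₂ = (1/2)x₁ + 1/2}, so that P ∩ ℤ² = {(1,1)}. Let P_ℬ = {(x, z₁, z₂) ∈ ℝ² × ℝ² × ℝ² : x ∈ P, x_i = z_{i1} + 2z_{i2}, z_{i1} + z_{i2} ≤ 1, 0 ≤ z_{i1}, z_{i2} ≤ 1 for i = 1,2} be the full binary extended formulation of P. Then, for the single split set S = {(x, z₁, z₂) : 0 < x₂ − z_{12} < 1}, one has proj_x(conv(P_ℬ \ S)) = {(1,1)} = conv(P ∩ ℤ²). -/
import Mathlib


open Set

/-- Let `P = {x ∈ [0,2]² : x₂ = x₁/2 + 1/2}`, so that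
`P ∩ ℤ² = {(1,1)}`.  Let `P_ℬ` be the full binary extended formulation of `P`
(`x_i = z_{i1} + 2z_{i2}`, `z_{i1} + z_{i2} ≤ 1`, `z ∈ [0,1]⁴`).  Then for the single
split set `S = {(x,z₁,z₂) : 0 < x₂ - z_{12} < 1}` one has
`proj_x(conv(P_ℬ \ S)) = {(1,1)} = conv(P ∩ ℤ²)`. -/
theorem stmt17 (P : Set (ℝ × ℝ))
    (hP : P = {x | 0 ≤ x.1 ∧ x.1 ≤ 2 ∧ 0 ≤ x.2 ∧ x.2 ≤ 2 ∧
      x.2 = (1 / 2) * x.1 + 1 / 2})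
    (PB : Set ((ℝ × ℝ) × ((ℝ × ℝ) × (ℝ × ℝ))))
    (hPB : PB = {p | p.1 ∈ P ∧
      (0 ≤ p.2.1.1 ∧ p.2.1.1 ≤ 1) ∧ (0 ≤ p.2.1.2 ∧ p.2.1.2 ≤ 1) ∧
      (0 ≤ p.2.2.1 ∧ p.2.2.1 ≤ 1) ∧ (0 ≤ p.2.2.2 ∧ p.2.2.2 ≤ 1) ∧
      p.1.1 = p.2.1.1 + 2 * p.2.1.2 ∧ p.1.2 = p.2.2.1 + 2 * p.2.2.2 ∧
      p.2.1.1 + p.2.1.2 ≤ 1 ∧ p.2.2.1 + p.2.2.2 ≤ 1})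
    (S : Set ((ℝ × ℝ) × ((ℝ × ℝ) × (ℝ × ℝ))))
    (hS : S = {p | 0 < p.1.2 - p.2.1.2 ∧ p.1.2 - p.2.1.2 < 1}) :
    {x ∈ P | ∃ w₁ w₂ : ℤ, x = ((w₁ : ℝ), (w₂ : ℝ))} = {((1 : ℝ), (1 : ℝ))} ∧
    Prod.fst '' (convexHull ℝ (PB \ S)) = {((1 : ℝ), (1 : ℝ))} ∧
    convexHull ℝ {x ∈ P | ∃ w₁ w₂ : ℤ, x = ((w₁ : ℝ), (w₂ : ℝ))} =
      {((1 : ℝ), (1 : ℝ))} := by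
  subst hP hPB hS
  have h1 : {x ∈ {x : ℝ × ℝ | 0 ≤ x.1 ∧ x.1 ≤ 2 ∧ 0 ≤ x.2 ∧ x.2 ≤ 2 ∧
      x.2 = (1 / 2) * x.1 + 1 / 2} | ∃ w₁ w₂ : ℤ, x = ((w₁ : ℝ), (w₂ : ℝ))} =
      {((1 : ℝ), (1 : ℝ))} := by
    ext ⟨a, b⟩
    simp only [mem_setOf_eq, mem_sep_iff, mem_singleton_iff, Prod.mk.injEq, Prod.ext_iff]
    constructor
    · rintro ⟨⟨ha0, ha2, hb0, hb2, hline⟩, w₁, w₂, hw1, hw2⟩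
      subst hw1 hw2
      have h2 : (2 * w₂ : ℝ) = w₁ + 1 := by linarith
      have h2' : 2 * w₂ = w₁ + 1 := by exact_mod_cast h2
      have hw1' : (0 : ℤ) ≤ w₁ := by exact_mod_cast ha0
      have hw1'' : (w₁ : ℤ) ≤ 2 := by exact_mod_cast ha2
      have : w₁ = 1 ∧ w₂ = 1 := by omega
      constructor <;> simp [this.1, this.2]
    · rintro ⟨rfl, rfl⟩
      refine ⟨⟨by norm_num, by norm_num, by norm_num, by norm_num, by norm_num⟩,
        1, 1, by norm_num, by norm_num⟩
  refine ⟨h1, ?_, by rw [h1, convexHull_singleton]⟩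
  -- the projection statement
  set A : Set ((ℝ × ℝ) × ((ℝ × ℝ) × (ℝ × ℝ))) :=
    {p | p.1 ∈ {x : ℝ × ℝ | 0 ≤ x.1 ∧ x.1 ≤ 2 ∧ 0 ≤ x.2 ∧ x.2 ≤ 2 ∧
      x.2 = (1 / 2) * x.1 + 1 / 2} ∧
      (0 ≤ p.2.1.1 ∧ p.2.1.1 ≤ 1) ∧ (0 ≤ p.2.1.2 ∧ p.2.1.2 ≤ 1) ∧
      (0 ≤ p.2.2.1 ∧ p.2.2.1 ≤ 1) ∧ (0 ≤ p.2.2.2 ∧ p.2.2.2 ≤ 1) ∧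
      p.1.1 = p.2.1.1 + 2 * p.2.1.2 ∧ p.1.2 = p.2.2.1 + 2 * p.2.2.2 ∧
      p.2.1.1 + p.2.1.2 ≤ 1 ∧ p.2.2.1 + p.2.2.2 ≤ 1} \
    {p | 0 < p.1.2 - p.2.1.2 ∧ p.1.2 - p.2.1.2 < 1}
  have hconv : Convex ℝ {p : (ℝ × ℝ) × ((ℝ × ℝ) × (ℝ × ℝ)) | p.1 = ((1 : ℝ), (1 : ℝ))} := by
    intro x hx y hy a b ha hb hab
    simp only [mem_setOf_eq] at hx hy ⊢
    have : (a • x + b • y).1 = a • x.1 + b • y.1 := rfl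
    rw [this, hx, hy]
    ext <;> simp <;> linarith
  have hsub : A ⊆ {p : (ℝ × ℝ) × ((ℝ × ℝ) × (ℝ × ℝ)) | p.1 = ((1 : ℝ), (1 : ℝ))} := by
    rintro p ⟨⟨⟨hx10, hx12, hx20, hx22, hline⟩, ⟨hz110, hz111⟩, ⟨hz120, hz121⟩,
      ⟨hz210, hz211⟩, ⟨hz220, hz221⟩, he1, he2, hs1, hs2⟩, hns⟩
    simp only [mem_setOf_eq, not_and, not_lt] at hns
    have hd : p.1.2 - p.2.1.2 = p.2.1.1 / 2 + 1 / 2 := by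
      rw [hline, he1]; ring
    have hpos : 0 < p.1.2 - p.2.1.2 := by rw [hd]; linarith
    have hge : 1 ≤ p.1.2 - p.2.1.2 := hns hpos
    have hz11 : p.2.1.1 = 1 := by rw [hd] at hge; linarith
    have hz12 : p.2.1.2 = 0 := by linarith
    have hx1 : p.1.1 = 1 := by rw [he1, hz11, hz12]; ring
    have hx2 : p.1.2 = 1 := by rw [hline, hx1]; norm_num
    simp only [mem_setOf_eq]
    exact Prod.ext hx1 hx2
  have hhull : convexHull ℝ A ⊆ {p : (ℝ × ℝ) × ((ℝ × ℝ) × (ℝ × ℝ)) | p.1 = ((1 : ℝ), (1 : ℝ))} :=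
    convexHull_min hsub hconv
  apply Subset.antisymm
  · rintro x ⟨p, hp, rfl⟩
    exact hhull hp
  · rintro x hx
    rw [mem_singleton_iff] at hx
    subst hx
    refine ⟨(((1 : ℝ), (1 : ℝ)), (((1 : ℝ), (0 : ℝ)), ((1 : ℝ), (0 : ℝ)))),
      subset_convexHull ℝ A ⟨?_, ?_⟩, rfl⟩
    · exact ⟨⟨by norm_num, by norm_num, by norm_num, by norm_num, by norm_num⟩,
        ⟨by norm_num, by norm_num⟩, ⟨by norm_num, by norm_num⟩,
        ⟨by norm_num, by norm_num⟩, ⟨by norm_num, by norm_num⟩,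
        by norm_num, by norm_num, by norm_num, by norm_num⟩
    · simp
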